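/- Let ρ_{31}, ρ_{32}, ρ_{41}, ρ_{42}, ρ_{k1}, ρ_{k2}, χ, σ₁₂ be real numbers with (ρ_{41}, σ₁₂ρ_{42}) ≠ (0,0), and define τ_{3k}(β) := [ρ_{32}(ρ_{k2}ρ_{41} − ρ_{k1}ρ_{42}) + χ(βρ_{k1} − σ₁₂ρ_{k2})] / (βρ_{41} − σ₁₂ρ_{42}) on the domain D := {β ∈ ℝ : βρ_{41} − σ₁₂ρ_{42} ≠ 0}. Then τ_{3k} is injective on D if and only if (ρ_{k2}ρ_{41} − ρ_{k1}ρ_{42})(ρ_{32}ρ_{41} − χσ₁₂) ≠ 0. Moreover, if (ρ_{k2}ρ_{41} − ρ_{k1}ρ_{42})(ρ_{32}ρ_{41} − χσ₁₂) = 0, then τ_{3k} is constant on D. (Proposition 1, first part: τ_{3k}(π,·) can be inverted for β if and only if (ρ_{k2}ρ_{41} − ρ_{k1}ρ_{42})(ρ_{32}ρ_{41} − χσ₁₂) ≠ 0.) -/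

import Mathlib

/-- Proposition 1, first part. With `(ρ₄₁, σ₁₂ρ₄₂) ≠ (0,0)`, the
reparameterized moment function
`τ_{3k}(β) = [ρ₃₂(ρ_{k2}ρ₄₁ − ρ_{k1}ρ₄₂) + χ(βρ_{k1} − σ₁₂ρ_{k2})]/(βρ₄₁ − σ₁₂ρ₄₂)`
is injective on its domain `D = {β : βρ₄₁ − σ₁₂ρ₄₂ ≠ 0}` if and only if
`(ρ_{k2}ρ₄₁ − ρ_{k1}ρ₄₂)(ρ₃₂ρ₄₁ − χσ₁₂) ≠ 0`; moreover, if this product is zero then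
`τ_{3k}` is constant on `D`. Here `s12 = σ₁₂`. -/
theorem tau3k_invertible_iff (ρ31 ρ32 ρ41 ρ42 ρk1 ρk2 χ s12 : ℝ)
    (h : (ρ41, s12 * ρ42) ≠ (0, 0)) :
    let τ : ℝ → ℝ := fun β =>
      (ρ32 * (ρk2 * ρ41 - ρk1 * ρ42) + χ * (β * ρk1 - s12 * ρk2)) /
        (β * ρ41 - s12 * ρ42)
    let D : Set ℝ := {β | β * ρ41 - s12 * ρ42 ≠ 0}
    (Set.InjOn τ D ↔ (ρk2 * ρ41 - ρk1 * ρ42) * (ρ32 * ρ41 - χ * s12) ≠ 0) ∧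
    ((ρk2 * ρ41 - ρk1 * ρ42) * (ρ32 * ρ41 - χ * s12) = 0 →
      ∀ βh ∈ D, ∀ βt ∈ D, τ βh = τ βt) := by
  intro τ D
  have hconst : (ρk2 * ρ41 - ρk1 * ρ42) * (ρ32 * ρ41 - χ * s12) = 0 →
      ∀ βh ∈ D, ∀ βt ∈ D, τ βh = τ βt := by
    intro hK βh hh βt ht
    have hdh : βh * ρ41 - s12 * ρ42 ≠ 0 := hh
    have hdt : βt * ρ41 - s12 * ρ42 ≠ 0 := ht
    show _ / _ = _ / _
    rw [div_eq_div_iff hdh hdt]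
    linear_combination (βt - βh) * hK
  refine ⟨⟨fun hinj => ?_, fun hK β1 h1 β2 h2 heq => ?_⟩, hconst⟩
  · by_contra hK
    -- find two distinct points of D
    obtain ⟨β1, β2, h1, h2, hne⟩ :
        ∃ β1 β2 : ℝ, β1 ∈ D ∧ β2 ∈ D ∧ β1 ≠ β2 := by
      rcases eq_or_ne ρ41 0 with hr | hr
      · have hs : s12 * ρ42 ≠ 0 := by
          intro hs; exact h (by rw [hr, hs])
        refine ⟨0, 1, ?_, ?_, by norm_num⟩
        · show (0:ℝ) * ρ41 - s12 * ρ42 ≠ 0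
          simpa [hr] using hs
        · show (1:ℝ) * ρ41 - s12 * ρ42 ≠ 0
          simpa [hr] using hs
      · refine ⟨(s12 * ρ42 + 1) / ρ41, (s12 * ρ42 + 2) / ρ41, ?_, ?_, ?_⟩
        · show (s12 * ρ42 + 1) / ρ41 * ρ41 - s12 * ρ42 ≠ 0
          field_simp
          norm_num
        · show (s12 * ρ42 + 2) / ρ41 * ρ41 - s12 * ρ42 ≠ 0
          field_simp
          norm_num
        · intro hcontra
          rw [div_eq_div_iff hr hr] at hcontra
          have : (1:ℝ) * ρ41 = 2 * ρ41 := by linarith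
          have := mul_right_cancel₀ hr this
          norm_num at this
    exact hne (hinj h1 h2 (hconst hK β1 h1 β2 h2))
  · have hd1 : β1 * ρ41 - s12 * ρ42 ≠ 0 := h1
    have hd2 : β2 * ρ41 - s12 * ρ42 ≠ 0 := h2
    rw [show τ β1 = _ / _ from rfl, show τ β2 = _ / _ from rfl,
      div_eq_div_iff hd1 hd2] at heq
    have hz : (β2 - β1) * ((ρk2 * ρ41 - ρk1 * ρ42) * (ρ32 * ρ41 - χ * s12)) = 0 := by
      linear_combination heq
    rcases mul_eq_zero.mp hz with h0 | h0
    · linarith [sub_eq_zero.mp h0]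
    · exact absurd h0 hK
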